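/- The elliptic Artin monoid M'(D̃₄^{(1,1)}) is cancellative: for all elements u, v, w of M'(D̃₄^{(1,1)}), u·v = u·w implies v = w, and v·u = w·u implies v = w. -/

import Mathlib

/-!
STATEMENT 16: The elliptic Artin monoid `M'(D̃₄^{(1,1)})` is cancellative.
-/

namespace EllipticD4Monoid

/-- Generators: `Sum.inl i` is `tᵢ` (`i ∈ ℤ`), `Sum.inr j` is `sⱼ` (`j ∈ {1,2,3,4}`). -/
abbrev S : Type := ℤ ⊕ Fin 4

def t (i : ℤ) : FreeMonoid S := FreeMonoid.of (Sum.inl i)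
def s (j : Fin 4) : FreeMonoid S := FreeMonoid.of (Sum.inr j)

/-- The defining relations of `M'(D̃₄^{(1,1)})`:
(R1) `tᵢsⱼtᵢ = sⱼtᵢsⱼ` for `i ∈ ℤ`, `j ∈ {1,2,3,4}`;
(R2) `sᵢsⱼ = sⱼsᵢ` for `i ≠ j`;
(R3) `tᵢtᵢ₋₁ = tⱼtⱼ₋₁` for all `i, j ∈ ℤ`. -/
def rels : FreeMonoid S → FreeMonoid S → Prop := fun a b =>
  (∃ i j, a = t i * s j * t i ∧ b = s j * t i * s j) ∨
  (∃ i j, i ≠ j ∧ a = s i * s j ∧ b = s j * s i) ∨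
  (∃ i j : ℤ, a = t i * t (i - 1) ∧ b = t j * t (j - 1))

/-- The elliptic Artin monoid `M'(D̃₄^{(1,1)})`. -/
abbrev M := PresentedMonoid rels

/- ## auxiliary list-level development -/

abbrev T (i : ℤ) : S := Sum.inl i
abbrev Sg (a : Fin 4) : S := Sum.inr a

def R : List S → List S → Prop := fun a b =>
  (∃ i j, a = [T i, Sg j, T i] ∧ b = [Sg j, T i, Sg j]) ∨
  (∃ i j, i ≠ j ∧ a = [Sg i, Sg j] ∧ b = [Sg j, Sg i]) ∨
  (∃ i j : ℤ, a = [T i, T (i-1)] ∧ b = [T j, T (j-1)])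

def step (a b : List S) : Prop := ∃ p l r q, R l r ∧ a = p ++ l ++ q ∧ b = p ++ r ++ q

def sstep (a b : List S) : Prop := step a b ∨ step b a

def Eqv : List S → List S → Prop := Relation.ReflTransGen sstep

theorem Eqv.refl (a : List S) : Eqv a a := Relation.ReflTransGen.refl

theorem Eqv.trans {a b c : List S} (h1 : Eqv a b) (h2 : Eqv b c) : Eqv a c :=
  Relation.ReflTransGen.trans h1 h2

theorem Eqv.symm {a b : List S} (h : Eqv a b) : Eqv b a :=
  (@Relation.ReflTransGen.stdSymm _ sstep ⟨fun _ _ h => h.symm⟩).symm _ _ h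

theorem eqv_step {a b : List S} (h : step a b) : Eqv a b :=
  Relation.ReflTransGen.single (Or.inl h)

theorem step.ctx {a b : List S} (c d : List S) (h : step a b) :
    step (c ++ a ++ d) (c ++ b ++ d) := by
  obtain ⟨p, l, r, q, hR, rfl, rfl⟩ := h
  exact ⟨c ++ p, l, r, q ++ d, hR, by simp, by simp⟩

theorem Eqv.ctx {a b : List S} (c d : List S) (h : Eqv a b) :
    Eqv (c ++ a ++ d) (c ++ b ++ d) := by
  induction h with
  | refl => exact .refl _
  | tail _ h2 ih =>
    refine ih.trans (Relation.ReflTransGen.single ?_)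
    rcases h2 with h2 | h2
    · exact Or.inl (h2.ctx c d)
    · exact Or.inr (h2.ctx c d)

theorem Eqv.append_left {a b : List S} (c : List S) (h : Eqv a b) :
    Eqv (c ++ a) (c ++ b) := by simpa using h.ctx c []

theorem Eqv.cons {a b : List S} (g : S) (h : Eqv a b) : Eqv (g :: a) (g :: b) :=
  h.append_left [g]

theorem Eqv.append {a b c d : List S} (h1 : Eqv a b) (h2 : Eqv c d) :
    Eqv (a ++ c) (b ++ d) := by
  have := h1.ctx [] c
  simp only [List.nil_append] at this
  exact this.trans (h2.append_left b)

theorem R.len {l r : List S} (h : R l r) : l.length = r.length := by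
  rcases h with ⟨i, a, rfl, rfl⟩ | ⟨a, b, _, rfl, rfl⟩ | ⟨i, j, rfl, rfl⟩ <;> rfl

theorem step.len {a b : List S} (h : step a b) : a.length = b.length := by
  obtain ⟨p, l, r, q, hR, rfl, rfl⟩ := h
  simp [hR.len]

theorem Eqv.len {a b : List S} (h : Eqv a b) : a.length = b.length := by
  induction h with
  | refl => rfl
  | tail _ h2 ih =>
    rcases h2 with h2 | h2
    · exact ih.trans h2.len
    · exact ih.trans h2.len.symm

/- elementary rewriting moves -/

theorem braid (p q : List S) (i : ℤ) (a : Fin 4) :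
    Eqv (p ++ T i :: Sg a :: T i :: q) (p ++ Sg a :: T i :: Sg a :: q) :=
  eqv_step ⟨p, [T i, Sg a, T i], [Sg a, T i, Sg a], q, Or.inl ⟨i, a, rfl, rfl⟩, by simp, by simp⟩

theorem comm (p q : List S) {a b : Fin 4} (h : a ≠ b) :
    Eqv (p ++ Sg a :: Sg b :: q) (p ++ Sg b :: Sg a :: q) :=
  eqv_step ⟨p, [Sg a, Sg b], [Sg b, Sg a], q, Or.inr (Or.inl ⟨a, b, h, rfl, rfl⟩), by simp, by simp⟩

theorem delta (p q : List S) (i j : ℤ) :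
    Eqv (p ++ T i :: T (i-1) :: q) (p ++ T j :: T (j-1) :: q) :=
  eqv_step ⟨p, [T i, T (i-1)], [T j, T (j-1)], q, Or.inr (Or.inr ⟨i, j, rfl, rfl⟩), by simp, by simp⟩

/- the complement function -/

def f : S → S → List S
  | Sum.inl i, Sum.inl k => if i = k then [] else [T (i-1)]
  | Sum.inl i, Sum.inr a => [Sg a, T i]
  | Sum.inr a, Sum.inl i => [T i, Sg a]
  | Sum.inr a, Sum.inr b => if a = b then [] else [Sg b]

@[simp] theorem f_tt (i k : ℤ) : f (T i) (T k) = if i = k then [] else [T (i-1)] := rfl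
@[simp] theorem f_ts (i : ℤ) (a : Fin 4) : f (T i) (Sg a) = [Sg a, T i] := rfl
@[simp] theorem f_st (i : ℤ) (a : Fin 4) : f (Sg a) (T i) = [T i, Sg a] := rfl
@[simp] theorem f_ss (a b : Fin 4) : f (Sg a) (Sg b) = if a = b then [] else [Sg b] := rfl

theorem f_self (g : S) : f g g = [] := by rcases g with i | a <;> simp

def KeyStmt (n : ℕ) : Prop := ∀ (x : S) (u : List S) (y : S) (v : List S),
  u.length + 1 ≤ n → Eqv (x :: u) (y :: v) →
  ∃ w, Eqv u (f x y ++ w) ∧ Eqv v (f y x ++ w)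

end EllipticD4Monoid

namespace EllipticD4Monoid

theorem L1s {x z : S} {u m : List S} (h : step (x :: u) (z :: m)) :
    ∃ w, Eqv u (f x z ++ w) ∧ Eqv m (f z x ++ w) := by
  obtain ⟨p, l, r, q, hR, ha, hb⟩ := h
  cases p with
  | cons g p' =>
    simp only [List.cons_append, List.cons.injEq] at ha hb
    obtain ⟨rfl, rfl⟩ := ha
    obtain ⟨rfl, rfl⟩ := hb
    rw [f_self]
    exact ⟨p' ++ l ++ q, .refl _, (eqv_step ⟨p', l, r, q, hR, rfl, rfl⟩).symm⟩
  | nil =>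
    simp only [List.nil_append] at ha hb
    rcases hR with ⟨i, a, rfl, rfl⟩ | ⟨a, b, hab, rfl, rfl⟩ | ⟨i, j, rfl, rfl⟩
    · simp only [List.cons_append, List.cons.injEq] at ha hb
      obtain ⟨rfl, rfl⟩ := ha
      obtain ⟨rfl, rfl⟩ := hb
      exact ⟨q, .refl _, .refl _⟩
    · simp only [List.cons_append, List.cons.injEq] at ha hb
      obtain ⟨rfl, rfl⟩ := ha
      obtain ⟨rfl, rfl⟩ := hb
      rw [f_ss, f_ss, if_neg hab, if_neg (Ne.symm hab)]
      exact ⟨q, .refl _, .refl _⟩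
    · simp only [List.cons_append, List.cons.injEq] at ha hb
      obtain ⟨rfl, rfl⟩ := ha
      obtain ⟨rfl, rfl⟩ := hb
      by_cases hij : i = j
      · subst hij
        rw [f_self]
        exact ⟨T (i-1) :: q, .refl _, .refl _⟩
      · rw [f_tt, f_tt, if_neg hij, if_neg (Ne.symm hij)]
        exact ⟨q, .refl _, .refl _⟩

theorem L1 {x z : S} {u m : List S} (h : sstep (x :: u) (z :: m)) :
    ∃ w, Eqv u (f x z ++ w) ∧ Eqv m (f z x ++ w) := by
  rcases h with h | h
  · exact L1s h
  · obtain ⟨w, h1, h2⟩ := L1s h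
    exact ⟨w, h2, h1⟩

theorem useIH {n : ℕ} (IH : ∀ m, m < n → KeyStmt m) {x y : S} {u v : List S}
    (hl : u.length + 1 < n) (h : Eqv (x :: u) (y :: v)) :
    ∃ w, Eqv u (f x y ++ w) ∧ Eqv v (f y x ++ w) :=
  IH _ hl x u y v le_rfl h

theorem cancelWord {n : ℕ} (IH : ∀ m, m < n → KeyStmt m) :
    ∀ (c p q : List S), (c ++ p).length < n → Eqv (c ++ p) (c ++ q) → Eqv p q := by
  intro c
  induction c with
  | nil => intro p q _ h; simpa using h
  | cons g c ihc =>
    intro p q hl h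
    simp only [List.cons_append] at h hl
    obtain ⟨w, h1, h2⟩ := useIH IH (by simpa using hl) h
    rw [f_self] at h1 h2
    simp only [List.nil_append] at h1 h2
    exact ihc p q (by simp at hl ⊢; omega) (h1.trans h2.symm)


/- chain computation lemmas -/

theorem lem2 (i : ℤ) {a b : Fin 4} (hab : a ≠ b) (r : List S) :
    Eqv (T i :: Sg a :: Sg b :: T i :: Sg a :: r) (Sg b :: T i :: Sg a :: Sg b :: T i :: r) :=
  ((comm [T i] (T i :: Sg a :: r) hab).trans
   ((braid [T i, Sg b] r i a).symm.trans
    ((braid [] (Sg a :: T i :: r) i b).trans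
     (comm [Sg b, T i] (T i :: r) hab.symm))))

theorem lem3v (i : ℤ) {a b : Fin 4} (hab : a ≠ b) (r : List S) :
    Eqv (Sg b :: T i :: Sg a :: T i :: Sg b :: r) (Sg a :: T i :: Sg b :: T i :: Sg a :: r) :=
  ((braid [Sg b] (Sg b :: r) i a).trans
   ((comm [] (T i :: Sg a :: Sg b :: r) hab.symm).trans
    ((comm [Sg a, Sg b, T i] r hab).trans
     (braid [Sg a] (Sg a :: r) i b).symm)))

theorem lem4u (i j : ℤ) (a : Fin 4) (r : List S) :
    Eqv (T j :: Sg a :: T (j-1) :: Sg a :: T (j-1-1) :: r)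
        (T i :: Sg a :: T (i-1) :: Sg a :: T (i-1-1) :: r) :=
  ((braid [T j] (T (j-1-1) :: r) (j-1) a).symm.trans
   ((delta [] (Sg a :: T (j-1) :: T (j-1-1) :: r) j i).trans
    ((delta [T i, T (i-1), Sg a] r (j-1) (i-1)).trans
     (braid [T i] (T (i-1-1) :: r) (i-1) a))))

theorem lem4v (i j : ℤ) (a : Fin 4) (r : List S) :
    Eqv (T (i-1) :: Sg a :: T (j-1) :: T (j-1-1) :: Sg a :: r)
        (Sg a :: T i :: T (i-1) :: Sg a :: T (i-1-1) :: r) :=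
  ((delta [T (i-1), Sg a] (Sg a :: r) (j-1) (i-1)).trans
   ((braid [] (T (i-1-1) :: Sg a :: r) (i-1) a).trans
    ((braid [Sg a, T (i-1)] r (i-1-1) a).symm.trans
     (delta [Sg a] (Sg a :: T (i-1-1) :: r) (i-1) i))))

theorem lem5 (i : ℤ) (a : Fin 4) (r : List S) :
    Eqv (Sg a :: T i :: T (i-1) :: Sg a :: T (i-1-1) :: r)
        (T (i-1) :: Sg a :: T (i-1) :: T (i-1-1) :: Sg a :: r) :=
  ((delta [Sg a] (Sg a :: T (i-1-1) :: r) i (i-1)).trans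
   ((braid [Sg a, T (i-1)] r (i-1-1) a).trans
    (braid [] (T (i-1-1) :: Sg a :: r) (i-1) a).symm))



variable {n : ℕ}

theorem gcase1 (IH : ∀ m, m < n → KeyStmt m) {a b c : Fin 4}
    (hab : a ≠ b) (hca : c ≠ a) (hcb : c ≠ b) (p q : List S)
    (hl : p.length + 1 < n) (H : Eqv (Sg a :: p) (Sg b :: q)) :
    ∃ w, Eqv (Sg c :: p) (Sg b :: w) ∧ Eqv (Sg c :: q) (Sg a :: w) := by
  obtain ⟨r, h1, h2⟩ := useIH IH hl H
  simp only [f_ss, if_neg hab, if_neg (Ne.symm hab), List.cons_append, List.nil_append] at h1 h2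
  exact ⟨Sg c :: r, (Eqv.cons _ h1).trans (comm [] r hcb),
    (Eqv.cons _ h2).trans (comm [] r hca)⟩

theorem gcase2 (IH : ∀ m, m < n → KeyStmt m) (i : ℤ) {a b : Fin 4} (hab : a ≠ b)
    (p q : List S) (hl : p.length + 2 < n)
    (H : Eqv (Sg a :: T i :: p) (Sg b :: T i :: q)) :
    ∃ w, Eqv (T i :: Sg a :: p) (Sg b :: w) ∧ Eqv (T i :: Sg b :: q) (Sg a :: w) := by
  have lpq : p.length = q.length := by
    have := H.len; simp only [List.length_cons] at this; omega
  obtain ⟨r, h1, h2⟩ := useIH IH (by simp only [List.length_cons]; omega) H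
  simp only [f_ss, if_neg hab, if_neg (Ne.symm hab), List.cons_append, List.nil_append] at h1 h2
  -- h1 : Eqv (T i :: p) (Sg b :: r), h2 : Eqv (T i :: q) (Sg a :: r)
  have lr : p.length = r.length := by
    have := h1.len; simp only [List.length_cons] at this; omega
  obtain ⟨r2, h3, h4⟩ := useIH IH (by omega) h1
  simp only [f_ts, f_st, List.cons_append, List.nil_append] at h3 h4
  -- h3 : Eqv p (Sg b :: T i :: r2), h4 : Eqv r (T i :: Sg b :: r2)
  have lr2 : p.length = r2.length + 2 := by
    have := h3.len; simp only [List.length_cons] at this; omega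
  have h2' : Eqv (T i :: q) (Sg a :: T i :: Sg b :: r2) := h2.trans (Eqv.cons _ h4)
  obtain ⟨r3, h5, h6⟩ := useIH IH (by omega) h2'
  simp only [f_ts, f_st, List.cons_append, List.nil_append] at h5 h6
  -- h5 : Eqv q (Sg a :: T i :: r3), h6 : Eqv (T i :: Sg b :: r2) (T i :: Sg a :: r3)
  have lr3 : q.length = r3.length + 2 := by
    have := h5.len; simp only [List.length_cons] at this; omega
  have hbr : Eqv (Sg b :: r2) (Sg a :: r3) := by
    obtain ⟨r4, k1, k2⟩ := useIH IH (by simp only [List.length_cons]; omega) h6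
    rw [f_self] at k1 k2
    simp only [List.nil_append] at k1 k2
    exact k1.trans k2.symm
  obtain ⟨r5, h7, h8⟩ := useIH IH (by omega) hbr
  simp only [f_ss, if_neg hab, if_neg (Ne.symm hab), List.cons_append, List.nil_append] at h7 h8
  -- h7 : Eqv r2 (Sg a :: r5), h8 : Eqv r3 (Sg b :: r5)
  refine ⟨T i :: Sg a :: Sg b :: T i :: r5, ?_, ?_⟩
  · have e1 : Eqv (T i :: Sg a :: p) (T i :: Sg a :: Sg b :: T i :: r2) :=
      Eqv.cons _ (Eqv.cons _ h3)
    have e2 : Eqv (T i :: Sg a :: Sg b :: T i :: r2) (T i :: Sg a :: Sg b :: T i :: Sg a :: r5) :=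
      Eqv.cons _ (Eqv.cons _ (Eqv.cons _ (Eqv.cons _ h7)))
    exact e1.trans (e2.trans (lem2 i hab r5))
  · have e1 : Eqv (T i :: Sg b :: q) (T i :: Sg b :: Sg a :: T i :: r3) :=
      Eqv.cons _ (Eqv.cons _ h5)
    have e2 : Eqv (T i :: Sg b :: Sg a :: T i :: r3) (T i :: Sg b :: Sg a :: T i :: Sg b :: r5) :=
      Eqv.cons _ (Eqv.cons _ (Eqv.cons _ (Eqv.cons _ h8)))
    exact e1.trans (e2.trans ((lem2 i hab.symm r5).trans
      (comm [Sg a, T i] (T i :: r5) hab.symm)))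

theorem gcase3 (IH : ∀ m, m < n → KeyStmt m) (i : ℤ) {a b : Fin 4} (hab : a ≠ b)
    (p q : List S) (hl : p.length + 1 < n)
    (H : Eqv (Sg a :: p) (T i :: Sg b :: q)) :
    ∃ w, Eqv (Sg b :: p) (T i :: Sg a :: w) ∧ Eqv (Sg b :: T i :: q) (Sg a :: T i :: w) := by
  have lpq : p.length = q.length + 1 := by
    have := H.len; simp only [List.length_cons] at this; omega
  obtain ⟨r, h1, h2⟩ := useIH IH hl H
  simp only [f_ts, f_st, List.cons_append, List.nil_append] at h1 h2
  -- h1 : Eqv p (T i :: Sg a :: r), h2 : Eqv (Sg b :: q) (Sg a :: T i :: r)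
  have lr : p.length = r.length + 2 := by
    have := h1.len; simp only [List.length_cons] at this; omega
  obtain ⟨r2, h3, h4⟩ := useIH IH (by omega) h2
  simp only [f_ss, if_neg hab, if_neg (Ne.symm hab), List.cons_append, List.nil_append] at h3 h4
  -- h3 : Eqv q (Sg a :: r2), h4 : Eqv (T i :: r) (Sg b :: r2)
  obtain ⟨r3, h5, h6⟩ := useIH IH (by omega) h4
  simp only [f_ts, f_st, List.cons_append, List.nil_append] at h5 h6
  -- h5 : Eqv r (Sg b :: T i :: r3), h6 : Eqv r2 (T i :: Sg b :: r3)
  refine ⟨Sg b :: T i :: Sg a :: r3, ?_, ?_⟩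
  · have e1 : Eqv (Sg b :: p) (Sg b :: T i :: Sg a :: Sg b :: T i :: r3) :=
      Eqv.cons _ (h1.trans (Eqv.cons _ (Eqv.cons _ h5)))
    exact e1.trans (lem2 i hab r3).symm
  · have e1 : Eqv (Sg b :: T i :: q) (Sg b :: T i :: Sg a :: T i :: Sg b :: r3) :=
      Eqv.cons _ (Eqv.cons _ (h3.trans (Eqv.cons _ h6)))
    exact e1.trans (lem3v i hab r3)

theorem gcase4 (IH : ∀ m, m < n → KeyStmt m) (i j : ℤ) (hji : j ≠ i) (a : Fin 4)
    (p q : List S) (hl : p.length + 2 < n)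
    (H : Eqv (Sg a :: T j :: p) (T (j-1) :: q)) :
    ∃ w, Eqv (T j :: Sg a :: p) (T i :: Sg a :: w) ∧ Eqv (T (i-1) :: q) (Sg a :: T i :: w) := by
  have lpq : p.length + 1 = q.length := by
    have := H.len; simp only [List.length_cons] at this; omega
  obtain ⟨r, h1, h2⟩ := useIH IH (by simp only [List.length_cons]; omega) H
  simp only [f_ts, f_st, List.cons_append, List.nil_append] at h1 h2
  -- h1 : Eqv (T j :: p) (T (j-1) :: Sg a :: r), h2 : Eqv q (Sg a :: T (j-1) :: r)
  have lr : p.length = r.length + 1 := by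
    have := h1.len; simp only [List.length_cons] at this; omega
  have hjj : j ≠ j - 1 := by omega
  obtain ⟨r2, h3, h4⟩ := useIH IH (by omega) h1
  simp only [f_tt, if_neg hjj, if_neg (Ne.symm hjj), List.cons_append, List.nil_append] at h3 h4
  -- h3 : Eqv p (T (j-1) :: r2), h4 : Eqv (Sg a :: r) (T (j-1-1) :: r2)
  obtain ⟨r3, h5, h6⟩ := useIH IH (by omega) h4
  simp only [f_ts, f_st, List.cons_append, List.nil_append] at h5 h6
  -- h5 : Eqv r (T (j-1-1) :: Sg a :: r3), h6 : Eqv r2 (Sg a :: T (j-1-1) :: r3)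
  refine ⟨T (i-1) :: Sg a :: T (i-1-1) :: r3, ?_, ?_⟩
  · have e1 : Eqv (T j :: Sg a :: p) (T j :: Sg a :: T (j-1) :: Sg a :: T (j-1-1) :: r3) :=
      Eqv.cons _ (Eqv.cons _ (h3.trans (Eqv.cons _ h6)))
    exact e1.trans (lem4u i j a r3)
  · have e1 : Eqv (T (i-1) :: q)
        (T (i-1) :: Sg a :: T (j-1) :: T (j-1-1) :: Sg a :: r3) :=
      Eqv.cons _ (h2.trans (Eqv.cons _ (Eqv.cons _ h5)))
    exact e1.trans (lem4v i j a r3)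

theorem gcase5 (IH : ∀ m, m < n → KeyStmt m) (i j : ℤ) (hij : i ≠ j) (a : Fin 4)
    (p q : List S) (hl : p.length + 2 < n)
    (H : Eqv (T i :: Sg a :: p) (T j :: Sg a :: q)) :
    ∃ w, Eqv (Sg a :: T i :: p) (T (i-1) :: w) ∧ Eqv (Sg a :: T j :: q) (T (j-1) :: w) := by
  have lpq : p.length = q.length := by
    have := H.len; simp only [List.length_cons] at this; omega
  obtain ⟨r, h1, h2⟩ := useIH IH (by simp only [List.length_cons]; omega) H
  simp only [f_tt, if_neg hij, if_neg (Ne.symm hij), List.cons_append, List.nil_append] at h1 h2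
  -- h1 : Eqv (Sg a :: p) (T (i-1) :: r), h2 : Eqv (Sg a :: q) (T (j-1) :: r)
  have lr : p.length = r.length := by
    have := h1.len; simp only [List.length_cons] at this; omega
  obtain ⟨r2, h3, h4⟩ := useIH IH (by omega) h1
  simp only [f_ts, f_st, List.cons_append, List.nil_append] at h3 h4
  -- h3 : Eqv p (T (i-1) :: Sg a :: r2), h4 : Eqv r (Sg a :: T (i-1) :: r2)
  have lr2 : p.length = r2.length + 2 := by
    have := h3.len; simp only [List.length_cons] at this; omega
  have h2' : Eqv (Sg a :: q) (T (j-1) :: Sg a :: T (i-1) :: r2) := h2.trans (Eqv.cons _ h4)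
  obtain ⟨r3, h5, h6⟩ := useIH IH (by omega) h2'
  simp only [f_ts, f_st, List.cons_append, List.nil_append] at h5 h6
  -- h5 : Eqv q (T (j-1) :: Sg a :: r3), h6 : Eqv (Sg a :: T (i-1) :: r2) (Sg a :: T (j-1) :: r3)
  have hc : Eqv (T (i-1) :: r2) (T (j-1) :: r3) := by
    obtain ⟨r4, k1, k2⟩ := useIH IH (by simp only [List.length_cons]; omega) h6
    rw [f_self] at k1 k2
    simp only [List.nil_append] at k1 k2
    exact k1.trans k2.symm
  have hii : i - 1 ≠ j - 1 := by omega
  obtain ⟨r5, h7, h8⟩ := useIH IH (by omega) hc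
  simp only [f_tt, if_neg hii, if_neg (Ne.symm hii), List.cons_append, List.nil_append] at h7 h8
  -- h7 : Eqv r2 (T (i-1-1) :: r5), h8 : Eqv r3 (T (j-1-1) :: r5)
  refine ⟨Sg a :: T (i-1) :: T (i-1-1) :: Sg a :: r5, ?_, ?_⟩
  · have e1 : Eqv (Sg a :: T i :: p) (Sg a :: T i :: T (i-1) :: Sg a :: T (i-1-1) :: r5) :=
      Eqv.cons _ (Eqv.cons _ (h3.trans (Eqv.cons _ (Eqv.cons _ h7))))
    exact e1.trans (lem5 i a r5)
  · have e1 : Eqv (Sg a :: T j :: q) (Sg a :: T j :: T (j-1) :: Sg a :: T (j-1-1) :: r5) :=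
      Eqv.cons _ (Eqv.cons _ (h5.trans (Eqv.cons _ (Eqv.cons _ h8))))
    exact e1.trans ((lem5 j a r5).trans
      (delta [T (j-1), Sg a] (Sg a :: r5) (j-1) (i-1)))

theorem gcase6 (IH : ∀ m, m < n → KeyStmt m) (k : ℤ)
    (p q : List S) (hl : p.length + 1 < n)
    (H : Eqv (T (k-1) :: p) (T (k-1) :: q)) :
    Eqv p q := by
  obtain ⟨r, k1, k2⟩ := useIH IH hl H
  rw [f_self] at k1 k2
  simp only [List.nil_append] at k1 k2
  exact k1.trans k2.symm



theorem glue (IH : ∀ m, m < n → KeyStmt m) (x y z : S) (p q : List S)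
    (hl : (f z x ++ p).length < n) (H : Eqv (f z x ++ p) (f z y ++ q)) :
    ∃ w, Eqv (f x z ++ p) (f x y ++ w) ∧ Eqv (f y z ++ q) (f y x ++ w) := by
  by_cases hzx : z = x
  · subst hzx
    rw [f_self] at H ⊢
    exact ⟨q, H, .refl _⟩
  by_cases hzy : z = y
  · subst hzy
    rw [f_self] at H ⊢
    exact ⟨p, .refl _, H.symm⟩
  by_cases hxy : x = y
  · subst hxy
    rw [f_self]
    exact ⟨f x z ++ p, .refl _, Eqv.append_left _ (cancelWord IH (f z x) p q hl H).symm⟩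
  have hlen := H.len
  rcases x with i | a <;> rcases y with j | b <;> rcases z with k | c
  · -- ttt
    have hki : k ≠ i := by simpa using hzx
    have hkj : k ≠ j := by simpa using hzy
    have hij : i ≠ j := by simpa using hxy
    simp only [f_tt, if_neg hki, if_neg hkj, if_neg hij, if_neg (Ne.symm hij),
      if_neg (Ne.symm hki), if_neg (Ne.symm hkj),
      List.cons_append, List.nil_append, List.length_cons] at H hl ⊢
    exact ⟨p, .refl _, Eqv.cons _ (gcase6 IH k p q hl H).symm⟩
  · -- t t s : z = Sg c
    have hij : i ≠ j := by simpa using hxy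
    simp only [f_tt, f_ts, f_st, if_neg hij, if_neg (Ne.symm hij),
      List.cons_append, List.nil_append, List.length_cons] at H hl ⊢
    exact gcase5 IH i j hij c p q (by omega) H
  · -- t s t : x = T i, y = Sg b, z = T k  (mirror of gcase4)
    have hki : k ≠ i := by simpa using hzx
    simp only [f_tt, f_ts, f_st, if_neg hki, if_neg (Ne.symm hki),
      List.cons_append, List.nil_append, List.length_cons] at H hl hlen ⊢
    obtain ⟨w, g1, g2⟩ := gcase4 IH i k hki b q p (by omega) H.symm
    exact ⟨w, g2, g1⟩
  · -- t s s : x = T i, y = Sg b, z = Sg c  (mirror of gcase3)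
    have hcb : c ≠ b := by simpa using hzy
    simp only [f_ts, f_st, f_ss, if_neg hcb, if_neg (Ne.symm hcb),
      List.cons_append, List.nil_append, List.length_cons] at H hl hlen ⊢
    obtain ⟨w, g1, g2⟩ := gcase3 IH i hcb.symm q p (by omega) H.symm
    exact ⟨w, g2, g1⟩
  · -- s t t : x = Sg a, y = T j, z = T k
    have hkj : k ≠ j := by simpa using hzy
    simp only [f_tt, f_ts, f_st, if_neg hkj, if_neg (Ne.symm hkj),
      List.cons_append, List.nil_append, List.length_cons] at H hl ⊢
    exact gcase4 IH j k hkj a p q (by omega) H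
  · -- s t s : x = Sg a, y = T j, z = Sg c
    have hca : c ≠ a := by simpa using hzx
    simp only [f_ts, f_st, f_ss, if_neg hca, if_neg (Ne.symm hca),
      List.cons_append, List.nil_append, List.length_cons] at H hl ⊢
    exact gcase3 IH j hca.symm p q (by omega) H
  · -- s s t : x = Sg a, y = Sg b, z = T k
    have hab : a ≠ b := by simpa using hxy
    simp only [f_ts, f_st, f_ss, if_neg hab, if_neg (Ne.symm hab),
      List.cons_append, List.nil_append, List.length_cons] at H hl ⊢
    exact gcase2 IH k hab p q (by omega) H
  · -- s s s
    have hca : c ≠ a := by simpa using hzx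
    have hcb : c ≠ b := by simpa using hzy
    have hab : a ≠ b := by simpa using hxy
    simp only [f_ss, if_neg hca, if_neg hcb, if_neg hab, if_neg (Ne.symm hab),
      if_neg (Ne.symm hca), if_neg (Ne.symm hcb),
      List.cons_append, List.nil_append, List.length_cons] at H hl ⊢
    exact gcase1 IH hab hca hcb p q (by omega) H

theorem keyL : ∀ n, KeyStmt n := by
  intro n
  induction n using Nat.strong_induction_on with
  | _ n IH =>
  intro x u y v hlen h
  have main : ∀ a, Eqv a (y :: v) → ∀ x u, a = x :: u → u.length + 1 ≤ n →
      ∃ w, Eqv u (f x y ++ w) ∧ Eqv v (f y x ++ w) := by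
    intro a h
    induction h using Relation.ReflTransGen.head_induction_on with
    | refl =>
      rintro x u hx _
      injection hx with h1 h2
      subst h1; subst h2
      rw [f_self]
      exact ⟨v, .refl _, .refl _⟩
    | head hstep htail ih =>
      rintro x u rfl hlen
      rename_i c
      have hcl : c.length = u.length + 1 := by
        rcases hstep with hs | hs
        · simpa using hs.len.symm
        · simpa using hs.len
      cases c with
      | nil => simp at hcl
      | cons z m =>
        obtain ⟨p', hu, hm'⟩ := L1 hstep
        obtain ⟨q', hm, hv⟩ := ih z m rfl (by simp at hcl; omega)
        have hmlen : m.length = u.length := by simpa using hcl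
        have hl : (f z x ++ p').length < n := by
          have := hm'.len
          omega
        obtain ⟨w, g1, g2⟩ := glue IH x y z p' q' hl (hm'.symm.trans hm)
        exact ⟨w, hu.trans g1, hv.trans g2⟩
  exact main _ h x u rfl hlen



theorem left_cancel_word {c p q : List S} (h : Eqv (c ++ p) (c ++ q)) : Eqv p q :=
  cancelWord (n := (c ++ p).length + 1) (fun m _ => keyL m) c p q (by omega) h

/- reversal anti-automorphism -/

def neg : S → S
  | Sum.inl i => Sum.inl (-i)
  | Sum.inr a => Sum.inr a

theorem neg_neg (g : S) : neg (neg g) = g := by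
  rcases g with i | a <;> simp [neg]

def rv (l : List S) : List S := (l.map neg).reverse

theorem rv_append (a b : List S) : rv (a ++ b) = rv b ++ rv a := by
  simp [rv]

theorem rv_rv (l : List S) : rv (rv l) = l := by
  simp [rv, List.map_reverse, List.map_map, Function.comp_def, neg_neg]

theorem R.rho {l r : List S} (h : R l r) : R (rv l) (rv r) := by
  rcases h with ⟨i, a, rfl, rfl⟩ | ⟨a, b, hab, rfl, rfl⟩ | ⟨i, j, rfl, rfl⟩
  · exact Or.inl ⟨-i, a, rfl, rfl⟩
  · exact Or.inr (Or.inl ⟨b, a, hab.symm, rfl, rfl⟩)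
  · refine Or.inr (Or.inr ⟨-(i-1), -(j-1), ?_, ?_⟩) <;>
      · simp [rv, neg]

theorem step.rho {a b : List S} (h : step a b) : step (rv a) (rv b) := by
  obtain ⟨p, l, r, q, hR, rfl, rfl⟩ := h
  refine ⟨rv q, rv l, rv r, rv p, hR.rho, ?_, ?_⟩ <;>
    simp [rv_append, List.append_assoc]

theorem Eqv.rho {a b : List S} (h : Eqv a b) : Eqv (rv a) (rv b) := by
  induction h with
  | refl => exact .refl _
  | tail _ h2 ih =>
    refine ih.trans (Relation.ReflTransGen.single ?_)
    rcases h2 with h2 | h2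
    · exact Or.inl h2.rho
    · exact Or.inr h2.rho

theorem right_cancel_word {c p q : List S} (h : Eqv (p ++ c) (q ++ c)) : Eqv p q := by
  have h2 := h.rho
  rw [rv_append, rv_append] at h2
  have := (left_cancel_word h2).rho
  rwa [rv_rv, rv_rv] at this

/- bridge to the presented monoid -/

theorem R_rels {l r : List S} (h : R l r) :
    rels (FreeMonoid.ofList l) (FreeMonoid.ofList r) := by
  rcases h with ⟨i, a, rfl, rfl⟩ | ⟨a, b, hab, rfl, rfl⟩ | ⟨i, j, rfl, rfl⟩
  · exact Or.inl ⟨i, a, rfl, rfl⟩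
  · exact Or.inr (Or.inl ⟨a, b, hab, rfl, rfl⟩)
  · exact Or.inr (Or.inr ⟨i, j, rfl, rfl⟩)

theorem rels_R {a b : FreeMonoid S} (h : rels a b) :
    R (FreeMonoid.toList a) (FreeMonoid.toList b) := by
  rcases h with ⟨i, j, rfl, rfl⟩ | ⟨i, j, hij, rfl, rfl⟩ | ⟨i, j, rfl, rfl⟩
  · exact Or.inl ⟨i, j, rfl, rfl⟩
  · exact Or.inr (Or.inl ⟨i, j, hij, rfl, rfl⟩)
  · exact Or.inr (Or.inr ⟨i, j, rfl, rfl⟩)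

theorem step_con {a b : List S} (h : step a b) :
    conGen rels (FreeMonoid.ofList a) (FreeMonoid.ofList b) := by
  obtain ⟨p, l, r, q, hR, rfl, rfl⟩ := h
  show conGen rels (FreeMonoid.ofList p * FreeMonoid.ofList l * FreeMonoid.ofList q)
    (FreeMonoid.ofList p * FreeMonoid.ofList r * FreeMonoid.ofList q)
  exact ConGen.Rel.mul (ConGen.Rel.mul (ConGen.Rel.refl _)
    (ConGen.Rel.of _ _ (R_rels hR))) (ConGen.Rel.refl _)

theorem eqv_con {a b : List S} (h : Eqv a b) :
    conGen rels (FreeMonoid.ofList a) (FreeMonoid.ofList b) := by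
  induction h with
  | refl => exact ConGen.Rel.refl _
  | tail _ h2 ih =>
    rcases h2 with h2 | h2
    · exact ih.trans (step_con h2)
    · exact ih.trans (ConGen.Rel.symm (step_con h2))

theorem con_eqv {a b : FreeMonoid S} (h : conGen rels a b) :
    Eqv (FreeMonoid.toList a) (FreeMonoid.toList b) := by
  induction h with
  | of x y hxy =>
    exact eqv_step ⟨[], _, _, [], rels_R hxy, by simp, by simp⟩
  | refl x => exact .refl _
  | symm _ ih => exact ih.symm
  | trans _ _ ih1 ih2 => exact ih1.trans ih2
  | mul _ _ ih1 ih2 => exact ih1.append ih2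

theorem cancellative :
    ∀ u v w : M, (u * v = u * w → v = w) ∧ (v * u = w * u → v = w) := by
  intro u v w
  constructor
  · refine PresentedMonoid.inductionOn₃ u v w ?_
    intro a b c h
    have h' : conGen rels (a * b) (a * c) := Quotient.exact h
    have e : Eqv (FreeMonoid.toList a ++ FreeMonoid.toList b)
        (FreeMonoid.toList a ++ FreeMonoid.toList c) := con_eqv h'
    exact Quotient.sound (eqv_con (left_cancel_word e))
  · refine PresentedMonoid.inductionOn₃ u v w ?_
    intro a b c h
    have h' : conGen rels (b * a) (c * a) := Quotient.exact h
    have e : Eqv (FreeMonoid.toList b ++ FreeMonoid.toList a)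
        (FreeMonoid.toList c ++ FreeMonoid.toList a) := con_eqv h'
    exact Quotient.sound (eqv_con (right_cancel_word e))

end EllipticD4Monoid
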